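/- Let k₁, k₂, k₃, k₄ ∈ ℝ and let A ∈ ℝ^{12×12} be the block matrix with 3×3 blocks [[0,0,I,0],[0,0,0,I],[-k₃I,-k₁I,-k₄I,-k₂I],[-k₃I,-2k₁I,-k₄I,-2k₂I]], where I is the 3×3 identity matrix. Then the characteristic polynomial of A equals p(s)³, where p(s) = s⁴ + (2k₂ + k₄)s³ + (2k₁ + k₃ + k₂k₄)s² + (k₁k₄ + k₂k₃)s + k₁k₃. -/

import Mathlib

open Polynomial

/-- The `12 × 12` system matrix `A` with `3 × 3` blocks
`[[0,0,I,0],[0,0,0,I],[-k₃I,-k₁I,-k₄I,-k₂I],[-k₃I,-2k₁I,-k₄I,-2k₂I]]`. -/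
def Amat (k₁ k₂ k₃ k₄ : ℝ) : Matrix (Fin 12) (Fin 12) ℝ :=
  Matrix.of fun i j =>
    if i.val < 6 then (if j.val = i.val + 6 then 1 else 0)
    else if i.val < 9 then
      (if j.val = i.val - 6 then -k₃ else if j.val = i.val - 3 then -k₁
       else if j.val = i.val then -k₄ else if j.val = i.val + 3 then -k₂ else 0)
    else
      (if j.val = i.val - 9 then -k₃ else if j.val = i.val - 6 then -2*k₁
       else if j.val = i.val - 3 then -k₄ else if j.val = i.val then -2*k₂ else 0)

section Aux
open Matrix
variable {R n m o : Type*} [CommRing R] [DecidableEq n] [Fintype n] [DecidableEq o] [Fintype o]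
lemma charmatrix_blockDiagonal (M : o → Matrix n n R) :
    charmatrix (blockDiagonal M) = blockDiagonal (fun k => charmatrix (M k)) := by
  ext ⟨i,k⟩ ⟨j,k'⟩
  by_cases h : k = k'
  · subst h
    by_cases hij : i = j <;>
      simp [hij, charmatrix_apply, blockDiagonal_apply, diagonal_apply, Prod.ext_iff]
  · simp [charmatrix_apply, blockDiagonal_apply_ne _ _ _ h, diagonal_apply, Prod.ext_iff, h]
lemma charpoly_blockDiagonal (M : o → Matrix n n R) :
    (blockDiagonal M).charpoly = ∏ k, (M k).charpoly := by
  rw [Matrix.charpoly, charmatrix_blockDiagonal, det_blockDiagonal]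
  rfl


def Mmat (k₁ k₂ k₃ k₄ : ℝ) : Matrix (Fin 4) (Fin 4) ℝ :=
  !![0,0,1,0; 0,0,0,1; -k₃,-k₁,-k₄,-k₂; -k₃,-2*k₁,-k₄,-2*k₂]

set_option maxHeartbeats 2000000 in
lemma Amat_eq (k₁ k₂ k₃ k₄ : ℝ) :
    Amat k₁ k₂ k₃ k₄ =
      reindex finProdFinEquiv finProdFinEquiv
        (blockDiagonal fun _ : Fin 3 => Mmat k₁ k₂ k₃ k₄) := by
  ext i j
  rw [reindex_apply]
  simp only [submatrix_apply, finProdFinEquiv_symm_apply, blockDiagonal_apply]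
  fin_cases i <;> fin_cases j <;>
    simp [Amat, Mmat, Fin.divNat, Fin.modNat, show ((3:Fin 12):ℕ)=3 from rfl, show ((4:Fin 12):ℕ)=4 from rfl, show ((5:Fin 12):ℕ)=5 from rfl, show ((6:Fin 12):ℕ)=6 from rfl, show ((7:Fin 12):ℕ)=7 from rfl, show ((8:Fin 12):ℕ)=8 from rfl, show ((9:Fin 12):ℕ)=9 from rfl, show ((10:Fin 12):ℕ)=10 from rfl, show ((11:Fin 12):ℕ)=11 from rfl, Matrix.vecHead, Matrix.vecTail] <;> norm_num

lemma charmatrix_Mmat (k₁ k₂ k₃ k₄ : ℝ) :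
    (Mmat k₁ k₂ k₃ k₄).charmatrix =
      !![X, 0, -1, 0; 0, X, 0, -1;
         C k₃, C k₁, X + C k₄, C k₂;
         C k₃, C (2*k₁), C k₄, X + C (2*k₂)] := by
  ext i j
  fin_cases i <;> fin_cases j <;>
    simp [Mmat, charmatrix_apply, Matrix.diagonal, Fin.ext_iff, show ((3:Fin 4):ℕ)=3 from rfl, Matrix.vecHead, Matrix.vecTail] <;> ring

lemma charpoly_Mmat (k₁ k₂ k₃ k₄ : ℝ) :
    (Mmat k₁ k₂ k₃ k₄).charpoly =
      X^4 + C (2*k₂ + k₄) * X^3 + C (2*k₁ + k₃ + k₂*k₄) * X^2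
        + C (k₁*k₄ + k₂*k₃) * X + C (k₁*k₃) := by
  rw [Matrix.charpoly, charmatrix_Mmat]
  simp [Matrix.det_succ_row_zero, Fin.sum_univ_succ, Fin.succAbove]
  rw [show (C (2:ℝ)) = 2 from map_ofNat C 2]
  ring

lemma charpoly_Amat (k₁ k₂ k₃ k₄ : ℝ) :
    (Amat k₁ k₂ k₃ k₄).charpoly = (Mmat k₁ k₂ k₃ k₄).charpoly ^ 3 := by
  rw [Amat_eq, Matrix.charpoly_reindex, charpoly_blockDiagonal]
  simp [pow_succ]

end Aux

/-- The characteristic polynomial of the closed-loop system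
matrix `A` equals `p(s)³` where
`p(s) = s⁴ + (2k₂+k₄)s³ + (2k₁+k₃+k₂k₄)s² + (k₁k₄+k₂k₃)s + k₁k₃`. -/
theorem stmt_3 (k₁ k₂ k₃ k₄ : ℝ) :
    (Amat k₁ k₂ k₃ k₄).charpoly
      = (X^4 + C (2*k₂ + k₄) * X^3 + C (2*k₁ + k₃ + k₂*k₄) * X^2
          + C (k₁*k₄ + k₂*k₃) * X + C (k₁*k₃))^3 := by
  rw [charpoly_Amat, charpoly_Mmat]
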